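/- arXiv:2401.06576 — 2 statements merged into one kernel-verified Lean document; each statement's English description precedes it below -/
import Mathlib

section
/- Let J be a 2×2 real matrix with eigenvalues 0 < λ₁ ≤ λ₂ (or λ₁ ≤ λ₂ < 0) and eigenvectors r₁, r₂ (assume J diagonalizable with linearly independent r₁, r₂ if λ₁ = λ₂), and let v(x) = Jx. Define s(x) = arctan( det(x, r₁)^(−λ₁) · det(x, r₂)^(λ₂) ) with signed powers p^q = sign(p)|p|^q. Then on the open set where det(x,r₁) ≠ 0 and det(x,r₂) ≠ 0, s is differentiable and v(x)ᵀ∇s(x) = 0. -/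
/-- Signed power p^q := sign(p)·|p|^q. -/
noncomputable def spow (p q : ℝ) : ℝ := Real.sign p * |p| ^ q

/-- 2×2 determinant of the matrix with columns u and v. -/
def det2 (u v : ℝ × ℝ) : ℝ := u.1 * v.2 - u.2 * v.1

lemma det2_ne_of_ind (r1 r2 : ℝ × ℝ) (hind : LinearIndependent ℝ ![r1, r2]) : det2 r1 r2 ≠ 0 := by
  intro h
  rw [LinearIndependent.pair_iff] at hind
  have h1 := hind r2.2 (-r1.2) (by
    apply Prod.ext <;> simp [det2] at h ⊢ <;> nlinarith [h])
  have h2 := hind r2.1 (-r1.1) (by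
    apply Prod.ext <;> simp [det2] at h ⊢ <;> nlinarith [h, h1.1, h1.2])
  have := hind 1 0 (by
    apply Prod.ext <;> simp
    · nlinarith [h2.2]
    · nlinarith [h1.2])
  simp at this

-- spow rewrite
lemma spow_eq (p q : ℝ) (e : ℝ) (he : e = -1 ∨ e = 1) (hp : 0 < e * p) :
    spow p q = e * (e * p) ^ q := by
  rcases he with rfl | rfl
  · have h : p < 0 := by linarith
    rw [spow, Real.sign_of_neg h, abs_of_neg h]
    ring_nf
  · have h : 0 < p := by linarith
    rw [spow, Real.sign_of_pos h, abs_of_pos h]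
    ring_nf

/-- For a source/sink v(x) = Jx with real eigenvalues of one sign
(0 < λ₁ ≤ λ₂ or λ₁ ≤ λ₂ < 0) and linearly independent eigenvectors r₁, r₂,
s(x) = arctan(det(x,r₁)^(−λ₁)·det(x,r₂)^(λ₂)) is differentiable with v(x)ᵀ∇s(x) = 0
wherever det(x,r₁) ≠ 0 and det(x,r₂) ≠ 0. -/
theorem stmt5 (J : (ℝ × ℝ) →ₗ[ℝ] (ℝ × ℝ)) (l1 l2 : ℝ) (r1 r2 : ℝ × ℝ)
    (hsign : (0 < l1 ∧ l1 ≤ l2) ∨ (l1 ≤ l2 ∧ l2 < 0))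
    (hind : LinearIndependent ℝ ![r1, r2])
    (he1 : J r1 = l1 • r1) (he2 : J r2 = l2 • r2)
    (s : ℝ × ℝ → ℝ)
    (hs : ∀ x, s x = Real.arctan (spow (det2 x r1) (-l1) * spow (det2 x r2) l2))
    (x : ℝ × ℝ) (hx1 : det2 x r1 ≠ 0) (hx2 : det2 x r2 ≠ 0) :
    DifferentiableAt ℝ s x ∧ fderiv ℝ s x (J x) = 0 := by
  have hd : det2 r1 r2 ≠ 0 := det2_ne_of_ind r1 r2 hind
  -- decompose x
  obtain ⟨a, b, hx⟩ : ∃ a b : ℝ, x = a • r1 + b • r2 := by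
    refine ⟨det2 x r2 / det2 r1 r2, -(det2 x r1 / det2 r1 r2), ?_⟩
    have hd' : r1.1 * r2.2 - r1.2 * r2.1 ≠ 0 := hd
    apply Prod.ext <;> simp only [det2, Prod.fst_add, Prod.snd_add, Prod.smul_fst, Prod.smul_snd, smul_eq_mul]
    · linear_combination (-x.1) * mul_inv_cancel₀ hd'
    · linear_combination (-x.2) * mul_inv_cancel₀ hd'
  have hJx : J x = (a * l1) • r1 + (b * l2) • r2 := by
    rw [hx, map_add, map_smul, map_smul, he1, he2, smul_smul, smul_smul]
  have key1 : det2 (J x) r1 = l2 * det2 x r1 := by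
    rw [hJx, hx]; simp [det2]; ring
  have key2 : det2 (J x) r2 = l1 * det2 x r2 := by
    rw [hJx, hx]; simp [det2]; ring
  -- signs
  set e1 := Real.sign (det2 x r1) with he1'
  set e2 := Real.sign (det2 x r2) with he2'
  have hp1 : 0 < e1 * det2 x r1 := Real.sign_mul_pos_of_ne_zero _ hx1
  have hp2 : 0 < e2 * det2 x r2 := Real.sign_mul_pos_of_ne_zero _ hx2
  have he1v : e1 = -1 ∨ e1 = 1 := Real.sign_apply_eq_of_ne_zero _ hx1
  have he2v : e2 = -1 ∨ e2 = 1 := Real.sign_apply_eq_of_ne_zero _ hx2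
  -- derivative of the base linear maps
  have hD1 : HasFDerivAt (fun y : ℝ × ℝ => det2 y r1)
      (r1.2 • ContinuousLinearMap.fst ℝ ℝ ℝ - r1.1 • ContinuousLinearMap.snd ℝ ℝ ℝ) x :=
    (hasFDerivAt_fst.mul_const _).sub (hasFDerivAt_snd.mul_const _)
  have hD2 : HasFDerivAt (fun y : ℝ × ℝ => det2 y r2)
      (r2.2 • ContinuousLinearMap.fst ℝ ℝ ℝ - r2.1 • ContinuousLinearMap.snd ℝ ℝ ℝ) x :=
    (hasFDerivAt_fst.mul_const _).sub (hasFDerivAt_snd.mul_const _)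
  have hP : HasFDerivAt (fun y => e1 * (e1 * det2 y r1) ^ (-l1))
      (e1 • ((-l1 * (e1 * det2 x r1) ^ (-l1 - 1)) •
        (e1 • (r1.2 • ContinuousLinearMap.fst ℝ ℝ ℝ - r1.1 • ContinuousLinearMap.snd ℝ ℝ ℝ)))) x :=
    ((hD1.const_mul e1).rpow_const (Or.inl hp1.ne')).const_mul e1
  have hQ : HasFDerivAt (fun y => e2 * (e2 * det2 y r2) ^ l2)
      (e2 • ((l2 * (e2 * det2 x r2) ^ (l2 - 1)) •
        (e2 • (r2.2 • ContinuousLinearMap.fst ℝ ℝ ℝ - r2.1 • ContinuousLinearMap.snd ℝ ℝ ℝ)))) x :=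
    ((hD2.const_mul e2).rpow_const (Or.inl hp2.ne')).const_mul e2
  have hprod := hP.mul hQ
  have harc := (Real.hasDerivAt_arctan _).comp_hasFDerivAt x hprod
  -- eventual equality of s with the smooth model
  have hc1 : ContinuousAt (fun y : ℝ × ℝ => e1 * det2 y r1) x := by unfold det2; fun_prop
  have hc2 : ContinuousAt (fun y : ℝ × ℝ => e2 * det2 y r2) x := by unfold det2; fun_prop
  have hev1 : ∀ᶠ y in nhds x, 0 < e1 * det2 y r1 := hc1.eventually (eventually_gt_nhds hp1)
  have hev2 : ∀ᶠ y in nhds x, 0 < e2 * det2 y r2 := hc2.eventually (eventually_gt_nhds hp2)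
  have heq : s =ᶠ[nhds x] fun y => Real.arctan
      (e1 * (e1 * det2 y r1) ^ (-l1) * (e2 * (e2 * det2 y r2) ^ l2)) := by
    filter_upwards [hev1, hev2] with y hy1 hy2
    rw [hs y, spow_eq _ _ e1 he1v hy1, spow_eq _ _ e2 he2v hy2]
  have hfinal := harc.congr_of_eventuallyEq heq
  refine ⟨hfinal.differentiableAt, ?_⟩
  rw [hfinal.fderiv]
  have hJ1 : (r1.2 • ContinuousLinearMap.fst ℝ ℝ ℝ - r1.1 • ContinuousLinearMap.snd ℝ ℝ ℝ) (J x)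
      = l2 * det2 x r1 := by
    simp only [ContinuousLinearMap.coe_sub', Pi.sub_apply, ContinuousLinearMap.coe_smul',
      Pi.smul_apply, ContinuousLinearMap.coe_fst', ContinuousLinearMap.coe_snd', smul_eq_mul]
    simp only [det2] at key1 ⊢
    linarith [key1]
  have hJ2 : (r2.2 • ContinuousLinearMap.fst ℝ ℝ ℝ - r2.1 • ContinuousLinearMap.snd ℝ ℝ ℝ) (J x)
      = l1 * det2 x r2 := by
    simp only [ContinuousLinearMap.coe_sub', Pi.sub_apply, ContinuousLinearMap.coe_smul',
      Pi.smul_apply, ContinuousLinearMap.coe_fst', ContinuousLinearMap.coe_snd', smul_eq_mul]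
    simp only [det2] at key2 ⊢
    linarith [key2]
  simp only [ContinuousLinearMap.coe_smul', Pi.smul_apply, ContinuousLinearMap.add_apply,
    ContinuousLinearMap.coe_smul', Pi.smul_apply, hJ1, hJ2, smul_eq_mul]
  have hA1 : (e1 * det2 x r1) ^ (-l1 - 1) * (e1 * det2 x r1) = (e1 * det2 x r1) ^ (-l1) := by
    rw [← Real.rpow_add_one hp1.ne' (-l1 - 1)]; norm_num
  have hB1 : (e2 * det2 x r2) ^ (l2 - 1) * (e2 * det2 x r2) = (e2 * det2 x r2) ^ l2 := by
    rw [← Real.rpow_add_one hp2.ne' (l2 - 1)]; norm_num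
  apply mul_eq_zero_of_right
  linear_combination e1 * e2 * l1 * l2 * ((e1 * det2 x r1) ^ (-l1)) * hB1
    - e1 * e2 * l1 * l2 * ((e2 * det2 x r2) ^ l2) * hA1
end

section
/- Let J ∈ ℝ^{2×2} with complex (non-real) eigenvalues, R the rotation by π/2, Ĵ = ½(RJ + (RJ)ᵀ), α = trace(J), β = √|det Ĵ|, and let v(x) = Jx. Define s(x) = α·arctan( (aᵀx)/(β·bᵀx) ) + β·ln(xᵀĴx) with aᵀ = (1,0)Ĵ and bᵀ = (1,0)R. Then on the open set where bᵀx ≠ 0 and xᵀĴx > 0, s is differentiable and v(x)ᵀ∇s(x) = 0. -/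
set_option maxHeartbeats 1600000 in
/-- For v(x) = Jx with non-real eigenvalues (i.e. (tr J)² < 4 det J),
with Ĵ = ½(RJ + (RJ)ᵀ), α = tr J, β = √|det Ĵ|, aᵀ = (1,0)Ĵ, bᵀ = (1,0)R, the field
s(x) = α·arctan((aᵀx)/(β·bᵀx)) + β·ln(xᵀĴx) is differentiable and satisfies
v(x)ᵀ∇s(x) = 0 on the open set where bᵀx ≠ 0 and xᵀĴx > 0.
Here J = [[j11,j12],[j21,j22]], R = [[0,−1],[1,0]], so
Ĵ = [[−j21, (j11−j22)/2], [(j11−j22)/2, j12]], aᵀx = −j21·x₁ + ((j11−j22)/2)·x₂ and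
bᵀx = −x₂. -/
theorem stmt14 (j11 j12 j21 j22 : ℝ)
    (hcmplx : (j11 + j22) ^ 2 - 4 * (j11 * j22 - j12 * j21) < 0)
    (v : ℝ × ℝ → ℝ × ℝ)
    (hv : ∀ x, v x = (j11 * x.1 + j12 * x.2, j21 * x.1 + j22 * x.2))
    (Q ax bx : ℝ × ℝ → ℝ)
    (hQ : ∀ x, Q x = -j21 * x.1 ^ 2 + (j11 - j22) * x.1 * x.2 + j12 * x.2 ^ 2)
    (hax : ∀ x, ax x = -j21 * x.1 + ((j11 - j22) / 2) * x.2)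
    (hbx : ∀ x, bx x = -x.2)
    (α β : ℝ) (hα : α = j11 + j22)
    (hβ : β = Real.sqrt |(-j21) * j12 - ((j11 - j22) / 2) ^ 2|)
    (s : ℝ × ℝ → ℝ)
    (hs : ∀ x, s x = α * Real.arctan (ax x / (β * bx x)) + β * Real.log (Q x))
    (x : ℝ × ℝ) (hbx0 : bx x ≠ 0) (hQ0 : 0 < Q x) :
    DifferentiableAt ℝ s x ∧ fderiv ℝ s x (v x) = 0 := by
  have hx2 : x.2 ≠ 0 := by rw [hbx] at hbx0; simpa using hbx0
  have hpos : 0 < -j21 * j12 - ((j11 - j22) / 2) ^ 2 := by nlinarith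
  have hβpos : 0 < β := by
    rw [hβ]; exact Real.sqrt_pos.2 (abs_pos.2 (ne_of_gt hpos))
  have hβ2 : β ^ 2 = -j21 * j12 - ((j11 - j22) / 2) ^ 2 := by
    rw [hβ, abs_of_pos hpos]; exact Real.sq_sqrt hpos.le
  have hQx : 0 < -j21 * x.1 ^ 2 + (j11 - j22) * x.1 * x.2 + j12 * x.2 ^ 2 := by
    rw [hQ] at hQ0; exact hQ0
  have hsf : s = fun p : ℝ × ℝ =>
      α * Real.arctan ((-j21 * p.1 + ((j11 - j22) / 2) * p.2) * (β * -p.2)⁻¹) +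
        β * Real.log (-j21 * p.1 ^ 2 + (j11 - j22) * p.1 * p.2 + j12 * p.2 ^ 2) := by
    funext p
    rw [hs, hax, hbx, hQ, div_eq_mul_inv]
  -- derivatives
  have hA : HasFDerivAt (fun p : ℝ × ℝ => -j21 * p.1 + ((j11 - j22) / 2) * p.2)
      ((-j21) • ContinuousLinearMap.fst ℝ ℝ ℝ + ((j11 - j22) / 2) • ContinuousLinearMap.snd ℝ ℝ ℝ) x :=
    ((hasFDerivAt_fst (p := x)).const_mul (-j21)).add ((hasFDerivAt_snd (p := x)).const_mul ((j11 - j22) / 2))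
  have hB : HasFDerivAt (fun p : ℝ × ℝ => β * -p.2)
      (β • (-(ContinuousLinearMap.snd ℝ ℝ ℝ))) x :=
    ((hasFDerivAt_snd (p := x)).neg).const_mul β
  have hB0 : β * -x.2 ≠ 0 := mul_ne_zero (ne_of_gt hβpos) (neg_ne_zero.2 hx2)
  have hBinv : HasFDerivAt (fun p : ℝ × ℝ => (β * -p.2)⁻¹)
      ((-((β * -x.2) ^ 2)⁻¹) • (β • (-(ContinuousLinearMap.snd ℝ ℝ ℝ)))) x :=
    (hasDerivAt_inv hB0).comp_hasFDerivAt x hB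
  have hDiv := hA.mul hBinv
  have hArctan := hDiv.arctan
  have hQf : HasFDerivAt (fun p : ℝ × ℝ => -j21 * p.1 ^ 2 + (j11 - j22) * p.1 * p.2 + j12 * p.2 ^ 2)
      (((-j21) • (x.1 • ContinuousLinearMap.fst ℝ ℝ ℝ + x.1 • ContinuousLinearMap.fst ℝ ℝ ℝ) +
        (j11 - j22) • (x.1 • ContinuousLinearMap.snd ℝ ℝ ℝ + x.2 • ContinuousLinearMap.fst ℝ ℝ ℝ)) +
        j12 • (x.2 • ContinuousLinearMap.snd ℝ ℝ ℝ + x.2 • ContinuousLinearMap.snd ℝ ℝ ℝ)) x := by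
    have hf1 : HasFDerivAt (fun p : ℝ × ℝ => p.1) (ContinuousLinearMap.fst ℝ ℝ ℝ) x := hasFDerivAt_fst
    have hf2 : HasFDerivAt (fun p : ℝ × ℝ => p.2) (ContinuousLinearMap.snd ℝ ℝ ℝ) x := hasFDerivAt_snd
    have h1 : HasFDerivAt (fun p : ℝ × ℝ => p.1 ^ 2)
        (x.1 • ContinuousLinearMap.fst ℝ ℝ ℝ + x.1 • ContinuousLinearMap.fst ℝ ℝ ℝ) x := by
      simpa [pow_two, Pi.mul_def] using hf1.mul hf1
    have h2 : HasFDerivAt (fun p : ℝ × ℝ => p.1 * p.2)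
        (x.1 • ContinuousLinearMap.snd ℝ ℝ ℝ + x.2 • ContinuousLinearMap.fst ℝ ℝ ℝ) x :=
      hf1.mul hf2
    have h3 : HasFDerivAt (fun p : ℝ × ℝ => p.2 ^ 2)
        (x.2 • ContinuousLinearMap.snd ℝ ℝ ℝ + x.2 • ContinuousLinearMap.snd ℝ ℝ ℝ) x := by
      simpa [pow_two, Pi.mul_def] using hf2.mul hf2
    have := ((h1.const_mul (-j21)).add ((h2.const_mul (j11 - j22)))).add (h3.const_mul j12)
    refine this.congr_of_eventuallyEq (Filter.Eventually.of_forall fun p => ?_)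
    simp only [Pi.add_apply]
    ring
  have hLog := hQf.log (ne_of_gt hQx)
  have hS := (hArctan.const_mul α).add (hLog.const_mul β)
  rw [hsf]
  refine ⟨hS.differentiableAt, ?_⟩
  have hS' : HasFDerivAt (fun p : ℝ × ℝ =>
      α * Real.arctan ((-j21 * p.1 + ((j11 - j22) / 2) * p.2) * (β * -p.2)⁻¹) +
        β * Real.log (-j21 * p.1 ^ 2 + (j11 - j22) * p.1 * p.2 + j12 * p.2 ^ 2)) _ x := hS
  rw [hS'.fderiv, hv]
  simp only [ContinuousLinearMap.add_apply, ContinuousLinearMap.smul_apply,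
    ContinuousLinearMap.neg_apply, ContinuousLinearMap.coe_fst', ContinuousLinearMap.coe_snd',
    smul_eq_mul, Pi.mul_apply]
  have key : (-j21 * x.1 + (j11 - j22) / 2 * x.2) ^ 2 + β ^ 2 * x.2 ^ 2 =
      (-j21) * (-j21 * x.1 ^ 2 + (j11 - j22) * x.1 * x.2 + j12 * x.2 ^ 2) := by
    linear_combination x.2 ^ 2 * hβ2
  have hj21 : 0 < -j21 := by nlinarith [sq_nonneg (-j21 * x.1 + (j11 - j22) / 2 * x.2), mul_pos (mul_pos hβpos hβpos) (mul_pos (abs_pos.2 hx2) (abs_pos.2 hx2)), sq_abs x.2]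
  have hQne : (-j21 * x.1 ^ 2 + (j11 - j22) * x.1 * x.2 + j12 * x.2 ^ 2) ≠ 0 := ne_of_gt hQx
  have e1 : 1 + ((-j21 * x.1 + (j11 - j22) / 2 * x.2) * (β * -x.2)⁻¹) ^ 2 =
      (-j21) * (-j21 * x.1 ^ 2 + (j11 - j22) * x.1 * x.2 + j12 * x.2 ^ 2) / (β ^ 2 * x.2 ^ 2) := by
    rw [eq_div_iff (by positivity)]
    field_simp
    linear_combination (4 * x.2 ^ 2) * hβ2
  have hj21ne : -j21 ≠ 0 := ne_of_gt hj21
  have e2 : 1 / (1 + ((-j21 * x.1 + (j11 - j22) / 2 * x.2) * (β * -x.2)⁻¹) ^ 2) =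
      (β ^ 2 * x.2 ^ 2) / ((-j21) * (-j21 * x.1 ^ 2 + (j11 - j22) * x.1 * x.2 + j12 * x.2 ^ 2)) := by
    rw [e1, one_div_div]
  have hβne : β ≠ 0 := ne_of_gt hβpos
  have hD : (-j21 * x.1 + (j11 - j22) / 2 * x.2) * (-((β * -x.2) ^ 2)⁻¹ * (β * -(j21 * x.1 + j22 * x.2))) +
        (β * -x.2)⁻¹ * (-j21 * (j11 * x.1 + j12 * x.2) + (j11 - j22) / 2 * (j21 * x.1 + j22 * x.2)) =
      ((-j21 * x.1 + (j11 - j22) / 2 * x.2) * (j21 * x.1 + j22 * x.2) -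
        x.2 * (-j21 * (j11 * x.1 + j12 * x.2) + (j11 - j22) / 2 * (j21 * x.1 + j22 * x.2))) / (β * x.2 ^ 2) := by
    field_simp
    ring
  rw [e2, hα, hD]
  obtain ⟨QX, hQX⟩ : ∃ q : ℝ, -j21 * x.1 ^ 2 + (j11 - j22) * x.1 * x.2 + j12 * x.2 ^ 2 = q := ⟨_, rfl⟩
  rw [hQX] at hQne ⊢
  have hne1 : -j21 * QX ≠ 0 := mul_ne_zero hj21ne hQne
  have hne2 : β * x.2 ^ 2 ≠ 0 := by positivity
  have e3 : β ^ 2 * x.2 ^ 2 / (-j21 * QX) *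
        (((-j21 * x.1 + (j11 - j22) / 2 * x.2) * (j21 * x.1 + j22 * x.2) -
          x.2 * (-j21 * (j11 * x.1 + j12 * x.2) + (j11 - j22) / 2 * (j21 * x.1 + j22 * x.2))) / (β * x.2 ^ 2)) =
      β * ((-j21 * x.1 + (j11 - j22) / 2 * x.2) * (j21 * x.1 + j22 * x.2) -
          x.2 * (-j21 * (j11 * x.1 + j12 * x.2) + (j11 - j22) / 2 * (j21 * x.1 + j22 * x.2))) / (-j21 * QX) := by
    rw [div_mul_div_comm, div_eq_div_iff (mul_ne_zero hne1 hne2) hne1]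
    ring
  rw [e3]
  have e4 : β * (QX⁻¹ * (-j21 * (x.1 * (j11 * x.1 + j12 * x.2) + x.1 * (j11 * x.1 + j12 * x.2)) +
        (j11 - j22) * (x.1 * (j21 * x.1 + j22 * x.2) + x.2 * (j11 * x.1 + j12 * x.2)) +
        j12 * (x.2 * (j21 * x.1 + j22 * x.2) + x.2 * (j21 * x.1 + j22 * x.2)))) =
      β * (-j21 * (x.1 * (j11 * x.1 + j12 * x.2) + x.1 * (j11 * x.1 + j12 * x.2)) +
        (j11 - j22) * (x.1 * (j21 * x.1 + j22 * x.2) + x.2 * (j11 * x.1 + j12 * x.2)) +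
        j12 * (x.2 * (j21 * x.1 + j22 * x.2) + x.2 * (j21 * x.1 + j22 * x.2))) / QX := by
    ring
  rw [e4, ← mul_div_assoc, div_add_div _ _ hne1 hQne, div_eq_zero_iff]
  left
  ring
end
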